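/- In the q-boson algebra with a a⁺ - q² a⁺ a = 1, one has for all n, m ≥ 0: aⁿ · a⁺^(m) = Σ_{s=0}^{m} q^{n(s+m)} q^{(s-m)(s+m+1)/2} [n choose m-s]_q a⁺^(s) a^{n-m+s}, where a^(k) = a^k/[k]_q! and a⁺^(k) = (a⁺)^k/[k]_q!, and terms with negative exponent n-m+s are interpreted via the convention that [n choose m-s]_q = 0 when m-s > n. -/

import Mathlib

noncomputable section

/-- The field `ℂ(q)` of rational functions. -/
abbrev Fq : Type := RatFunc ℂ

/-- The indeterminate `q`. -/
def q : Fq := RatFunc.X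

/-- The balanced quantum integer `[n]_q = (q^n - q^{-n})/(q - q^{-1})`. -/
def qint (n : ℤ) : Fq := (q ^ n - q ^ (-n)) / (q - q⁻¹)

/-- The quantum factorial `[m]_q!`. -/
def qfact : ℕ → Fq
  | 0 => 1
  | n + 1 => qint (n + 1) * qfact n

/-- The balanced Gaussian binomial coefficient `[n choose k]_q`,
with the convention that it is `0` for `k < 0`. -/
def qbinom (n k : ℤ) : Fq :=
  if k < 0 then 0
  else (∏ i ∈ Finset.range k.toNat, qint (n - i)) / qfact k.toNat

lemma q_ne_zero : q ≠ 0 := RatFunc.X_ne_zero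

lemma X_pow_ne_one (k : ℕ) (hk : k ≠ 0) : (q : Fq) ^ k ≠ 1 := by
  intro hc
  have h1 : algebraMap (Polynomial ℂ) Fq (Polynomial.X ^ k) = algebraMap (Polynomial ℂ) Fq 1 := by
    rw [map_pow, map_one, RatFunc.algebraMap_X]; exact hc
  have h2 : (Polynomial.X : Polynomial ℂ) ^ k = 1 :=
    IsFractionRing.injective (Polynomial ℂ) Fq h1
  have := congrArg Polynomial.natDegree h2
  rw [Polynomial.natDegree_X_pow, Polynomial.natDegree_one] at this
  exact hk this

lemma qd_ne_zero : q - q⁻¹ ≠ 0 := by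
  intro hc
  have hq : q = q⁻¹ := sub_eq_zero.mp hc
  have h2 : (q:Fq) ^ 2 = 1 := by
    rw [sq]; nth_rewrite 2 [hq]; exact mul_inv_cancel₀ q_ne_zero
  exact X_pow_ne_one 2 (by norm_num) h2

lemma qint_ne_zero (k : ℤ) (hk : 0 < k) : qint k ≠ 0 := by
  unfold qint
  apply div_ne_zero _ qd_ne_zero
  intro hc
  have hq := sub_eq_zero.mp hc
  have h2 : (q:Fq) ^ (2*k) = 1 := by
    rw [two_mul, zpow_add₀ q_ne_zero]
    nth_rewrite 1 [hq]
    rw [← zpow_add₀ q_ne_zero]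
    norm_num
  rw [show (2*k) = ((2*k).toNat : ℤ) by omega, zpow_natCast] at h2
  exact X_pow_ne_one _ (by omega) h2

lemma qint_zero : qint 0 = 0 := by simp [qint]

lemma qint_one : qint 1 = 1 := by
  simp only [qint, zpow_one, zpow_neg, zpow_one]
  exact div_self qd_ne_zero

lemma qint_shift (n k : ℤ) : q ^ k * qint n = qint (n - k) + q ^ n * qint k := by
  have hn : (q:Fq) ^ n ≠ 0 := zpow_ne_zero _ q_ne_zero
  have hk : (q:Fq) ^ k ≠ 0 := zpow_ne_zero _ q_ne_zero
  have key : q ^ k * (q ^ n - q ^ (-n)) =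
      (q ^ (n-k) - q ^ (-(n-k))) + q ^ n * (q ^ k - q ^ (-k)) := by
    rw [neg_sub, zpow_sub₀ q_ne_zero, zpow_sub₀ q_ne_zero, zpow_neg, zpow_neg]
    field_simp
    ring
  unfold qint
  rw [← mul_div_assoc, ← mul_div_assoc, ← add_div, key]

lemma comm_coeff (m : ℤ) : q ^ (2*m) + q ^ (m-1) * qint m = q ^ m * qint (m+1) := by
  have hm : (q:Fq) ^ m ≠ 0 := zpow_ne_zero _ q_ne_zero
  have hq := q_ne_zero
  have key : q ^ (2*m) * (q - q⁻¹) + q ^ (m-1) * (q ^ m - q ^ (-m)) =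
      q ^ m * (q ^ (m+1) - q ^ (-(m+1))) := by
    rw [two_mul, zpow_add₀ q_ne_zero, zpow_sub₀ q_ne_zero, zpow_add₀ q_ne_zero,
      neg_add, zpow_add₀ q_ne_zero, zpow_neg, zpow_neg]
    field_simp
    ring
  unfold qint
  rw [← mul_div_assoc, ← mul_div_assoc, ← key, add_div, mul_div_cancel_right₀ _ qd_ne_zero]

lemma qfact_ne_zero (m : ℕ) : qfact m ≠ 0 := by
  induction m with
  | zero => simp [qfact]
  | succ n ih =>
      show qint (n+1) * qfact n ≠ 0
      exact mul_ne_zero (qint_ne_zero _ (by positivity)) ih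

lemma qbinom_neg (n k : ℤ) (hk : k < 0) : qbinom n k = 0 := if_pos hk

lemma qbinom_of_nonneg (n k : ℤ) (hk : 0 ≤ k) :
    qbinom n k = (∏ i ∈ Finset.range k.toNat, qint (n - i)) / qfact k.toNat :=
  if_neg (not_lt.mpr hk)

lemma qbinom_zero (n : ℤ) : qbinom n 0 = 1 := by
  simp [qbinom, qfact]

lemma qbinom_gt (n : ℕ) (k : ℤ) (hk : (n:ℤ) < k) : qbinom n k = 0 := by
  rw [qbinom_of_nonneg _ _ (by omega)]
  rw [Finset.prod_eq_zero (i := n) (by simp; omega) (by simp [qint_zero]), zero_div]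

lemma qpascal (n k : ℤ) :
    q ^ k * qbinom (n+1) k = qbinom n k + q ^ (n+1) * qbinom n (k-1) := by
  rcases lt_trichotomy k 0 with hk | rfl | hk
  · rw [qbinom_neg _ _ hk, qbinom_neg _ _ hk, qbinom_neg _ _ (by omega)]
    ring
  · rw [qbinom_zero, qbinom_zero, qbinom_neg _ _ (by omega)]
    simp
  · obtain ⟨t, ht⟩ : ∃ t : ℕ, k = (t:ℤ) + 1 := ⟨(k-1).toNat, by omega⟩
    subst ht
    have h1 : ((t:ℤ)+1).toNat = t + 1 := by omega
    have h2 : ((t:ℤ)+1-1).toNat = t := by omega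
    rw [qbinom_of_nonneg _ _ (by omega), qbinom_of_nonneg _ _ (by omega),
      qbinom_of_nonneg _ _ (by omega), h1, h2]
    have hterm : ∀ i ∈ Finset.range t, qint (n + 1 - (((i+1 : ℕ)) : ℤ)) = qint (n - i) := by
      intro i _
      congr 1
      push_cast
      ring
    have hprod1 : ∏ i ∈ Finset.range (t+1), qint (n+1 - i) =
        qint (n+1) * ∏ i ∈ Finset.range t, qint (n - i) := by
      rw [Finset.prod_range_succ', Finset.prod_congr rfl hterm]
      norm_num [mul_comm]
    have hprod2 : ∏ i ∈ Finset.range (t+1), qint (n - i) =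
        (∏ i ∈ Finset.range t, qint (n - i)) * qint (n - t) := Finset.prod_range_succ _ _
    have hfact : qfact (t+1) = qint (t+1) * qfact t := rfl
    set P := ∏ i ∈ Finset.range t, qint (n - i) with hP
    rw [hprod1, hprod2, hfact]
    have hqt : qint ((t:ℤ)+1) ≠ 0 := qint_ne_zero _ (by positivity)
    have hF : qfact t ≠ 0 := qfact_ne_zero t
    have hshift := qint_shift (n+1) ((t:ℤ)+1)
    have hnt : n + 1 - ((t:ℤ)+1) = n - t := by ring
    rw [hnt] at hshift
    rw [← mul_div_assoc, ← mul_div_assoc,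
      ← mul_div_mul_left (q ^ (n+1) * P) (qfact t) hqt, ← add_div]
    congr 1
    linear_combination P * hshift

lemma coeff_rec (n m s : ℕ) :
    q ^ (((n:ℤ)+1) * ((s:ℤ)+(m:ℤ))) * q ^ ((((s:ℤ)-(m:ℤ)) * ((s:ℤ)+(m:ℤ)+1)) / 2) *
        qbinom ((n:ℤ)+1) ((m:ℤ)-(s:ℤ)) =
      q ^ (2*(s:ℤ)) * (q ^ ((n:ℤ) * ((s:ℤ)+(m:ℤ))) * q ^ ((((s:ℤ)-(m:ℤ)) * ((s:ℤ)+(m:ℤ)+1)) / 2) *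
        qbinom (n:ℤ) ((m:ℤ)-(s:ℤ)))
      + q ^ ((s:ℤ)) * (q ^ ((n:ℤ) * (((s:ℤ)+1)+(m:ℤ))) *
          q ^ (((((s:ℤ)+1)-(m:ℤ)) * (((s:ℤ)+1)+(m:ℤ)+1)) / 2) *
        qbinom (n:ℤ) ((m:ℤ)-(s:ℤ)-1)) := by
  have hq := q_ne_zero
  have hpar : (2:ℤ) ∣ ((s:ℤ)-(m:ℤ)) * ((s:ℤ)+(m:ℤ)+1) := by
    rcases Int.even_or_odd ((s:ℤ)-(m:ℤ)) with hev | hod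
    · exact (hev.mul_right _).two_dvd
    · have hev2 : Even ((s:ℤ)+(m:ℤ)+1) := by
        obtain ⟨k, hk⟩ := hod
        exact ⟨(m:ℤ)+k+1, by omega⟩
      exact (hev2.mul_left _).two_dvd
  have hexp : (((s:ℤ)+1)-(m:ℤ)) * (((s:ℤ)+1)+(m:ℤ)+1) =
      ((s:ℤ)-(m:ℤ)) * ((s:ℤ)+(m:ℤ)+1) + 2*((s:ℤ)+1) := by ring
  have he' : ((((s:ℤ)+1)-(m:ℤ)) * (((s:ℤ)+1)+(m:ℤ)+1)) / 2 =
      (((s:ℤ)-(m:ℤ)) * ((s:ℤ)+(m:ℤ)+1)) / 2 + ((s:ℤ)+1) := by omega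
  rw [he']
  set e : ℤ := (((s:ℤ)-(m:ℤ)) * ((s:ℤ)+(m:ℤ)+1)) / 2 with hedef
  have hpas := qpascal (n:ℤ) ((m:ℤ)-(s:ℤ))
  have step1 : q ^ (((n:ℤ)+1) * ((s:ℤ)+(m:ℤ))) * q ^ e * qbinom ((n:ℤ)+1) ((m:ℤ)-(s:ℤ)) =
      q ^ ((n:ℤ)*((s:ℤ)+(m:ℤ)) + e + 2*(s:ℤ)) *
        (q ^ ((m:ℤ)-(s:ℤ)) * qbinom ((n:ℤ)+1) ((m:ℤ)-(s:ℤ))) := by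
    rw [← zpow_add₀ hq,
      show ((n:ℤ)+1) * ((s:ℤ)+(m:ℤ)) + e =
        ((n:ℤ)*((s:ℤ)+(m:ℤ)) + e + 2*(s:ℤ)) + ((m:ℤ)-(s:ℤ)) by ring,
      zpow_add₀ hq, mul_assoc]
  rw [step1, hpas, mul_add]
  congr 1
  · simp only [← mul_assoc, ← zpow_add₀ hq]
    congr 2
    ring
  · simp only [← mul_assoc, ← zpow_add₀ hq]
    congr 2
    ring

lemma a_mul_appow {A : Type*} [Ring A] [Algebra Fq A] (a ap : A)
    (h : a * ap - (q ^ 2 : Fq) • (ap * a) = 1) (s : ℕ) :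
    a * ap ^ s = (q ^ (2*(s:ℤ)) : Fq) • (ap ^ s * a) +
      ((q ^ ((s:ℤ)-1) * qint s) : Fq) • ap ^ (s-1) := by
  have hq := q_ne_zero
  have hrel : a * ap = (q ^ ((2:ℤ)) : Fq) • (ap * a) + 1 := by
    rw [sub_eq_iff_eq_add] at h
    rw [h, add_comm]
    norm_num [zpow_ofNat]
  induction s with
  | zero => simp [qint_zero]
  | succ s ih =>
      have hfac : ap ^ s * ap = ap ^ (s+1) := (pow_succ ap s).symm
      calc a * ap ^ (s+1) = (a * ap ^ s) * ap := by rw [pow_succ, ← mul_assoc]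
        _ = (q ^ (2*(s:ℤ)) : Fq) • (ap ^ s * (a * ap)) +
            ((q ^ ((s:ℤ)-1) * qint s) : Fq) • (ap ^ (s-1) * ap) := by
              rw [ih, add_mul, smul_mul_assoc, smul_mul_assoc, mul_assoc]
        _ = (q ^ (2*((s:ℤ)+1)) : Fq) • (ap ^ (s+1) * a) +
            ((q ^ (2*(s:ℤ)) : Fq) • ap ^ s +
             ((q ^ ((s:ℤ)-1) * qint s) : Fq) • (ap ^ (s-1) * ap)) := by
              rw [hrel, mul_add, mul_smul_comm, mul_one, smul_add, smul_smul,
                ← zpow_add₀ hq, ← mul_assoc, hfac]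
              rw [show 2*(s:ℤ) + 2 = 2*((s:ℤ)+1) by ring]
              abel
        _ = (q ^ (2*((s:ℤ)+1)) : Fq) • (ap ^ (s+1) * a) +
            ((q ^ (((s:ℕ)+1:ℤ)-1) * qint ((s:ℕ)+1)) : Fq) • ap ^ ((s+1)-1) := by
              congr 1
              rcases s with _ | t
              · simp [qint_zero, qint_one]
              · have hc := comm_coeff ((t:ℤ)+1)
                rw [show ((t:ℤ)+1-1) = (t:ℤ) by ring] at hc
                simp only [Nat.add_sub_cancel]
                push_cast
                rw [show ((t:ℤ)+1+1-1) = (t:ℤ)+1 by ring,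
                  show ((t:ℤ)+1-1) = (t:ℤ) by ring, ← pow_succ, ← add_smul, hc]

lemma a_mul_dpow {A : Type*} [Ring A] [Algebra Fq A] (a ap : A)
    (h : a * ap - (q ^ 2 : Fq) • (ap * a) = 1) (s k : ℕ) :
    a * (((qfact s)⁻¹ • ap ^ s) * a ^ k) =
      (q ^ (2*(s:ℤ)) : Fq) • (((qfact s)⁻¹ • ap ^ s) * a ^ (k+1)) +
      ((q ^ ((s:ℤ)-1) * qint s * (qfact s)⁻¹ : Fq)) • (ap ^ (s-1) * a ^ k) := by
  rw [smul_mul_assoc, mul_smul_comm, ← mul_assoc, a_mul_appow a ap h s, add_mul,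
    smul_mul_assoc, smul_mul_assoc, mul_assoc, ← pow_succ', smul_add, smul_smul, smul_smul]
  congr 1
  · rw [smul_mul_assoc, smul_smul, mul_comm]
  · congr 1
    ring

/-- The coefficient in the expansion. -/
def Cc (m n s : ℕ) : Fq :=
  q ^ ((n : ℤ) * ((s : ℤ) + m)) * q ^ ((((s : ℤ) - m) * ((s : ℤ) + m + 1)) / 2) *
    qbinom n ((m : ℤ) - s)

lemma Cc_eq_zero_left (m n s : ℕ) (hlt : n + s < m) : Cc m n s = 0 := by
  unfold Cc
  rw [qbinom_gt n _ (by omega), mul_zero]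

lemma Cc_eq_zero_right (m n s : ℕ) (hlt : m < s) : Cc m n s = 0 := by
  unfold Cc
  rw [qbinom_neg _ _ (by omega), mul_zero]

lemma Cc_zero_self (m : ℕ) : Cc m 0 m = 1 := by
  unfold Cc
  simp [sub_self, qbinom_zero]

lemma Cc_rec (m n s : ℕ) :
    Cc m (n+1) s = q ^ (2*(s:ℤ)) * Cc m n s + q ^ ((s:ℤ)) * Cc m n (s+1) := by
  unfold Cc
  push_cast
  rw [show (m:ℤ) - ((s:ℤ)+1) = (m:ℤ) - s - 1 by ring]
  exact coeff_rec n m s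

/-- In the q-boson algebra (an associative `ℂ(q)`-algebra generated by `a`, `a⁺`
with `a a⁺ - q² a⁺ a = 1`), for all `n, m ≥ 0`:
`aⁿ · a⁺^(m) = Σ_{s=0}^{m} q^{n(s+m)} q^{(s-m)(s+m+1)/2} [n choose m-s]_q a⁺^(s) a^{n-m+s}`,
where `a⁺^(k) = (a⁺)^k/[k]_q!`.  (Terms with `m - s > n` have coefficient
`[n choose m-s]_q = 0`, so the truncated exponent `n + s - m` is harmless.) -/
theorem qboson_pow_mul_divided_pow {A : Type*} [Ring A] [Algebra Fq A]
    (a ap : A) (h : a * ap - (q ^ 2 : Fq) • (ap * a) = 1) (n m : ℕ) :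
    a ^ n * ((qfact m)⁻¹ • ap ^ m) =
      ∑ s ∈ Finset.range (m + 1),
        (q ^ ((n : ℤ) * ((s : ℤ) + m)) *
         q ^ ((((s : ℤ) - m) * ((s : ℤ) + m + 1)) / 2) *
         qbinom n ((m : ℤ) - s)) •
          (((qfact s)⁻¹ • ap ^ s) * a ^ (n + s - m)) := by
  show a ^ n * ((qfact m)⁻¹ • ap ^ m) =
    ∑ s ∈ Finset.range (m + 1), Cc m n s • (((qfact s)⁻¹ • ap ^ s) * a ^ (n + s - m))
  induction n with
  | zero =>
      rw [pow_zero, one_mul, Finset.sum_eq_single m]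
      · rw [show 0 + m - m = 0 by omega, Cc_zero_self, pow_zero, mul_one, one_smul]
      · intro s hs hne
        rw [Finset.mem_range] at hs
        rw [Cc_eq_zero_left m 0 s (by omega), zero_smul]
      · intro hm
        exact absurd (Finset.self_mem_range_succ m) hm
  | succ n ih =>
      have step2 : a ^ (n+1) * ((qfact m)⁻¹ • ap ^ m) =
          ∑ s ∈ Finset.range (m+1),
            Cc m n s • (a * (((qfact s)⁻¹ • ap ^ s) * a ^ (n + s - m))) := by
        rw [pow_succ', mul_assoc, ih, Finset.mul_sum]
        exact Finset.sum_congr rfl fun s _ => mul_smul_comm _ _ _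
      rw [step2]
      have step3 : ∀ s ∈ Finset.range (m+1),
          Cc m n s • (a * (((qfact s)⁻¹ • ap ^ s) * a ^ (n + s - m))) =
            (Cc m n s * q ^ (2*(s:ℤ))) • (((qfact s)⁻¹ • ap ^ s) * a ^ (n+1+s-m)) +
            (Cc m n s * (q ^ ((s:ℤ)-1) * qint s * (qfact s)⁻¹)) •
              (ap ^ (s-1) * a ^ (n + s - m)) := by
        intro s _
        rw [a_mul_dpow a ap h s (n+s-m), smul_add, smul_smul, smul_smul]
        by_cases hc : m ≤ n + s
        · rw [show n + s - m + 1 = n+1+s-m by omega]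
        · simp [Cc_eq_zero_left m n s (by omega)]
      rw [Finset.sum_congr rfl step3, Finset.sum_add_distrib]
      have stepG : (∑ s ∈ Finset.range (m+1),
            (Cc m n s * (q ^ ((s:ℤ)-1) * qint s * (qfact s)⁻¹)) •
              (ap ^ (s-1) * a ^ (n + s - m))) =
          ∑ s ∈ Finset.range (m+1),
            (Cc m n (s+1) * q ^ ((s:ℤ))) • (((qfact s)⁻¹ • ap ^ s) * a ^ (n+1+s-m)) := by
        rw [Finset.sum_range_succ' _ m, Finset.sum_range_succ]
        have hzero1 : (Cc m n 0 * (q ^ (((0:ℕ):ℤ)-1) * qint ((0:ℕ):ℤ) * (qfact 0)⁻¹)) •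
            (ap ^ (0-1) * a ^ (n + 0 - m)) = 0 := by
          norm_num [qint_zero]
        have hzero2 : (Cc m n (m+1) * q ^ ((m:ℤ))) •
            (((qfact m)⁻¹ • ap ^ m) * a ^ (n+1+m-m)) = 0 := by
          rw [Cc_eq_zero_right m n (m+1) (by omega), zero_mul, zero_smul]
        rw [hzero1, hzero2, add_zero, add_zero]
        apply Finset.sum_congr rfl
        intro s _
        have hne : qint ((s:ℤ)+1) ≠ 0 := qint_ne_zero _ (by positivity)
        have hF : qfact s ≠ 0 := qfact_ne_zero s
        have hfac : qfact (s+1) = qint ((s:ℤ)+1) * qfact s := rfl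
        rw [show (s+1) - 1 = s by omega, show n + (s+1) - m = n+1+s-m by omega,
          smul_mul_assoc, smul_smul, hfac]
        congr 1
        push_cast
        rw [show ((s:ℤ)+1)-1 = (s:ℤ) by ring]
        field_simp
      rw [stepG, ← Finset.sum_add_distrib]
      apply Finset.sum_congr rfl
      intro s _
      rw [← add_smul, Cc_rec]
      congr 1
      ring
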